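/- Fix n ≥ 1. Let M(n) be the number of mutually abelian-bordered pairs (u,v) of binary words with |u| = |v| = n, and let M̄(n) be the number of mutually abelian-unbordered such pairs. Then the number of pairs (u,v) with |u| = |v| = n that have an external abelian-border but no internal abelian-border equals (4^n − M(n) − M̄(n))/2, and the same value counts the pairs that have an internal abelian-border but no external abelian-border. -/
import Mathlib


/-- Abelian equivalence of binary words; the alphabet `{a, b}` is encoded by
`Bool` with `a = true` and `b = false`. -/
def AbEq (x y : List Bool) : Prop :=
  x.count true = y.count true ∧ x.count false = y.count false

/-- `(x, y)` is an internal abelian-border of `(u, v)`: `x` is a nonempty proper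
suffix of `u`, `y` is a proper prefix of `v`, and `x ~ y`. -/
def IsIntBorder (u v x y : List Bool) : Prop :=
  x ≠ [] ∧ x ≠ u ∧ x <:+ u ∧ y <+: v ∧ y ≠ v ∧ AbEq x y

/-- `(x, y)` is an external abelian-border of `(u, v)`: `x` is a nonempty proper
prefix of `u`, `y` is a proper suffix of `v`, and `x ~ y`. -/
def IsExtBorder (u v x y : List Bool) : Prop :=
  x ≠ [] ∧ x ≠ u ∧ x <+: u ∧ y <:+ v ∧ y ≠ v ∧ AbEq x y

/-- `(u, v)` has an internal abelian-border. -/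
def HasIntB (u v : List Bool) : Prop := ∃ x y, IsIntBorder u v x y

/-- `(u, v)` has an external abelian-border. -/
def HasExtB (u v : List Bool) : Prop := ∃ x y, IsExtBorder u v x y

/-- `(u, v)` is mutually abelian-bordered. -/
def MAB (u v : List Bool) : Prop := HasIntB u v ∧ HasExtB u v

/-- `(u, v)` is mutually abelian-unbordered. -/
def MAU (u v : List Bool) : Prop := ¬ HasIntB u v ∧ ¬ HasExtB u v

/-- `lsb u v` is the length of the shortest internal abelian-border of `(u, v)`:
the least `t` with `1 ≤ t ≤ |u| - 1` such that the suffix of `u` of length `t`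
is abelian equivalent to the prefix of `v` of length `t`. -/
noncomputable def lsb (u v : List Bool) : ℕ :=
  sInf {t | 1 ≤ t ∧ t ≤ u.length - 1 ∧ AbEq (u.drop (u.length - t)) (v.take t)}

lemma count_tf (l : List Bool) : l.count true + l.count false = l.length := by
  induction l with
  | nil => simp
  | cons h t ih => cases h <;> simp [List.count_cons] <;> omega

lemma AbEq.ne_nil' {x y : List Bool} (h : AbEq x y) (hx : x ≠ []) : y ≠ [] := by
  intro hy
  subst hy
  simp [AbEq] at h
  have h1 := count_tf x
  have h2 : x.length = 0 := by omega
  exact hx (List.length_eq_zero_iff.mp h2)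

lemma AbEq.symm' {x y : List Bool} (h : AbEq x y) : AbEq y x := ⟨h.1.symm, h.2.symm⟩

lemma intB_swap (u v : List Bool) : HasIntB u v ↔ HasExtB v u := by
  constructor
  · rintro ⟨x, y, hx0, hxu, hxs, hyp, hyv, hab⟩
    exact ⟨y, x, hab.ne_nil' hx0, hyv, hyp, hxs, hxu, hab.symm'⟩
  · rintro ⟨y, x, hy0, hyv, hyp, hxs, hxu, hab⟩
    exact ⟨x, y, hab.ne_nil' hy0, hxu, hxs, hyp, hyv, hab.symm'⟩

theorem stmt_16 (n : ℕ) (hn : 1 ≤ n) :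
    (({p : List Bool × List Bool | p.1.length = n ∧ p.2.length = n ∧
          HasExtB p.1 p.2 ∧ ¬ HasIntB p.1 p.2}.ncard : ℚ)
        = ((4 ^ n : ℚ)
            - ({p : List Bool × List Bool | p.1.length = n ∧ p.2.length = n ∧
                MAB p.1 p.2}.ncard : ℚ)
            - ({p : List Bool × List Bool | p.1.length = n ∧ p.2.length = n ∧
                MAU p.1 p.2}.ncard : ℚ)) / 2)
    ∧ {p : List Bool × List Bool | p.1.length = n ∧ p.2.length = n ∧
          HasExtB p.1 p.2 ∧ ¬ HasIntB p.1 p.2}.ncard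
        = {p : List Bool × List Bool | p.1.length = n ∧ p.2.length = n ∧
          HasIntB p.1 p.2 ∧ ¬ HasExtB p.1 p.2}.ncard := by
  classical
  set T : Set (List Bool × List Bool) :=
    {p | p.1.length = n ∧ p.2.length = n} with hTdef
  set A : Set (List Bool × List Bool) :=
    {p | p.1.length = n ∧ p.2.length = n ∧ MAB p.1 p.2} with hAdef
  set B : Set (List Bool × List Bool) :=
    {p | p.1.length = n ∧ p.2.length = n ∧ MAU p.1 p.2} with hBdef
  set C : Set (List Bool × List Bool) :=
    {p | p.1.length = n ∧ p.2.length = n ∧ HasExtB p.1 p.2 ∧ ¬ HasIntB p.1 p.2} with hCdef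
  set D : Set (List Bool × List Bool) :=
    {p | p.1.length = n ∧ p.2.length = n ∧ HasIntB p.1 p.2 ∧ ¬ HasExtB p.1 p.2} with hDdef
  -- finiteness
  have hT : T.Finite := by
    have := ((List.finite_length_eq Bool n).prod (List.finite_length_eq Bool n))
    refine this.subset ?_
    rintro ⟨u, v⟩ ⟨h1, h2⟩
    exact ⟨h1, h2⟩
  have hA : A.Finite := hT.subset (by rintro ⟨u, v⟩ ⟨h1, h2, _⟩; exact ⟨h1, h2⟩)
  have hB : B.Finite := hT.subset (by rintro ⟨u, v⟩ ⟨h1, h2, _⟩; exact ⟨h1, h2⟩)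
  have hC : C.Finite := hT.subset (by rintro ⟨u, v⟩ ⟨h1, h2, _⟩; exact ⟨h1, h2⟩)
  have hD : D.Finite := hT.subset (by rintro ⟨u, v⟩ ⟨h1, h2, _⟩; exact ⟨h1, h2⟩)
  -- cardinality of T
  have e : {p : List Bool × List Bool // p.1.length = n ∧ p.2.length = n} ≃
      List.Vector Bool n × List.Vector Bool n :=
    { toFun := fun p => (⟨p.1.1, p.2.1⟩, ⟨p.1.2, p.2.2⟩)
      invFun := fun q => ⟨(q.1.1, q.2.1), q.1.2, q.2.2⟩
      left_inv := fun p => rfl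
      right_inv := fun q => rfl }
  have hTcard : T.ncard = 4 ^ n := by
    have h1 : T.ncard = Nat.card {p : List Bool × List Bool //
        p.1.length = n ∧ p.2.length = n} := rfl
    rw [h1, Nat.card_congr e, Nat.card_eq_fintype_card, Fintype.card_prod, card_vector,
      Fintype.card_bool, ← mul_pow]
    norm_num
  -- partition
  have hpart : T = (A ∪ B) ∪ (C ∪ D) := by
    ext ⟨u, v⟩
    simp only [hTdef, hAdef, hBdef, hCdef, hDdef, Set.mem_setOf_eq, Set.mem_union,
      MAB, MAU]
    by_cases h1 : HasIntB u v <;> by_cases h2 : HasExtB u v <;> tauto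
  have d1 : Disjoint A B := by
    rw [Set.disjoint_left]; rintro ⟨u, v⟩ ⟨_, _, h1, _⟩ ⟨_, _, h2, _⟩; exact h2 h1
  have d2 : Disjoint C D := by
    rw [Set.disjoint_left]; rintro ⟨u, v⟩ ⟨_, _, _, h1⟩ ⟨_, _, h2, _⟩; exact h1 h2
  have d3 : Disjoint (A ∪ B) (C ∪ D) := by
    rw [Set.disjoint_left]
    rintro ⟨u, v⟩ (⟨_, _, h1, h2⟩ | ⟨_, _, h1, h2⟩) (⟨_, _, h3, h4⟩ | ⟨_, _, h3, h4⟩) <;>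
      tauto
  have hsum : A.ncard + B.ncard + (C.ncard + D.ncard) = 4 ^ n := by
    rw [← hTcard, hpart, Set.ncard_union_eq d3 (hA.union hB) (hC.union hD),
      Set.ncard_union_eq d1 hA hB, Set.ncard_union_eq d2 hC hD]
  -- swap bijection between C and D
  have hImg : Prod.swap '' C = D := by
    rw [Set.image_swap_eq_preimage_swap]
    ext ⟨u, v⟩
    simp only [Set.mem_preimage, hCdef, hDdef, Set.mem_setOf_eq, Prod.swap_prod_mk]
    have h1 := intB_swap u v
    have h2 := intB_swap v u
    tauto
  have hCD : C.ncard = D.ncard := by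
    rw [← hImg, Set.ncard_image_of_injective C Prod.swap_injective]
  refine ⟨?_, hCD⟩
  have hq : (A.ncard : ℚ) + B.ncard + (C.ncard + D.ncard) = 4 ^ n := by
    exact_mod_cast congrArg (fun m : ℕ => (m : ℚ)) hsum
  have hq2 : (C.ncard : ℚ) = (D.ncard : ℚ) := by exact_mod_cast hCD
  linarith
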